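/- arXiv:2602.13538 — 3 statements merged into one kernel-verified Lean document; each statement's English description precedes it below -/
import Mathlib

section
/- Let p ≥ 1 and m ≥ 0 be integers. Let U be a p×p real orthogonal matrix with columns u_1, …, u_p, let λ_1, …, λ_p ∈ ℝ, and let δ_1, …, δ_p be nonzero real numbers. Let Σ be an invertible symmetric p×p real matrix. Set S = U·diag(λ_1,…,λ_p)·Uᵀ and Σ̃ = U·diag(δ_1,…,δ_p)·Uᵀ. Then tr[(Σ^{−1} − Σ̃^{−1})² S^m] = Σ_{j=1}^p (u_jᵀ Σ^{−2} u_j) λ_j^m − 2 Σ_{j=1}^p (u_jᵀ Σ^{−1} u_j) λ_j^m/δ_j + Σ_{j=1}^p λ_j^m/δ_j². -/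
open Matrix

lemma trace_helper {p : ℕ} (U M : Matrix (Fin p) (Fin p) ℝ) (v : Fin p → ℝ) :
    (M * (U * Matrix.diagonal v * Uᵀ)).trace
      = ∑ j, ((fun i => U i j) ⬝ᵥ (M *ᵥ fun i => U i j)) * v j := by
  rw [show M * (U * Matrix.diagonal v * Uᵀ) = (M * U * Matrix.diagonal v) * Uᵀ by
    simp [mul_assoc], Matrix.trace_mul_comm]
  simp only [Matrix.trace, Matrix.diag, Matrix.mul_apply, Matrix.diagonal, dotProduct,
    Matrix.mulVec, Matrix.transpose_apply, Finset.sum_mul, Finset.mul_sum,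
    Matrix.of_apply, mul_ite, mul_zero, ite_mul, zero_mul]
  refine Finset.sum_congr rfl fun x _ => ?_
  rw [Finset.sum_comm]
  simp [Finset.sum_ite_eq, Finset.mul_sum]
  refine Finset.sum_congr rfl fun i _ => ?_
  refine Finset.sum_congr rfl fun k _ => ?_
  ring

set_option maxHeartbeats 1000000 in
/-- Eigen-decomposition expansion of the generalized relative savings loss
`tr[(Σ⁻¹ − Σ̃⁻¹)² Sᵐ]` for rotation invariant estimators sharing the eigenvectors of `S`. -/
theorem stmt_1 (p m : ℕ) (hp : 1 ≤ p)
    (U : Matrix (Fin p) (Fin p) ℝ) (hU : Uᵀ * U = 1)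
    (lam : Fin p → ℝ) (δ : Fin p → ℝ) (hδ : ∀ j, δ j ≠ 0)
    (Sig : Matrix (Fin p) (Fin p) ℝ) (hSig : IsUnit Sig.det) (hSigSym : Sig.IsSymm)
    (S : Matrix (Fin p) (Fin p) ℝ) (hS : S = U * Matrix.diagonal lam * Uᵀ)
    (Stil : Matrix (Fin p) (Fin p) ℝ) (hStil : Stil = U * Matrix.diagonal δ * Uᵀ) :
    ((Sig⁻¹ - Stil⁻¹) ^ 2 * S ^ m).trace =
      (∑ j, ((fun i => U i j) ⬝ᵥ ((Sig⁻¹ * Sig⁻¹) *ᵥ fun i => U i j)) * lam j ^ m)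
        - 2 * ∑ j, ((fun i => U i j) ⬝ᵥ (Sig⁻¹ *ᵥ fun i => U i j)) * lam j ^ m / δ j
        + ∑ j, lam j ^ m / δ j ^ 2 := by
  have hU' : U * Uᵀ = 1 := mul_eq_one_comm.mp hU
  have h2 : ∀ X : Matrix (Fin p) (Fin p) ℝ, Uᵀ * (U * X) = X := fun X => by
    rw [← mul_assoc, hU, one_mul]
  have key : ∀ d e : Fin p → ℝ,
      (U * Matrix.diagonal d * Uᵀ) * (U * Matrix.diagonal e * Uᵀ)
        = U * Matrix.diagonal (fun j => d j * e j) * Uᵀ := by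
    intro d e
    simp only [mul_assoc, h2]
    rw [show (Matrix.diagonal fun j => d j * e j) = Matrix.diagonal d * Matrix.diagonal e by
      rw [Matrix.diagonal_mul_diagonal], mul_assoc]
  set A := Sig⁻¹ with hA
  have hB : Stil⁻¹ = U * Matrix.diagonal (fun j => (δ j)⁻¹) * Uᵀ := by
    apply inv_eq_right_inv
    rw [hStil, key]
    have hfun : (fun j => δ j * (δ j)⁻¹) = fun _ => (1 : ℝ) :=
      funext fun j => mul_inv_cancel₀ (hδ j)
    rw [hfun, Matrix.diagonal_one, mul_one, hU']
  set B := Stil⁻¹ with hBdef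
  have hSm : S ^ m = U * Matrix.diagonal (fun j => lam j ^ m) * Uᵀ := by
    induction m with
    | zero => simp [hU']
    | succ n ih =>
      rw [pow_succ, ih, hS, key]
      have hfun : (fun j => lam j ^ n * lam j) = fun j => lam j ^ (n + 1) :=
        funext fun j => (pow_succ _ _).symm
      rw [hfun]
  have hBSm : B * S ^ m = U * Matrix.diagonal (fun j => (δ j)⁻¹ * lam j ^ m) * Uᵀ := by
    rw [hB, hSm, key]
  have hsq : (A - B) ^ 2 * S ^ m
      = A * A * S ^ m - A * (B * S ^ m) - B * (A * S ^ m) + B * (B * S ^ m) := by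
    noncomm_ring
  rw [hsq, Matrix.trace_add, Matrix.trace_sub, Matrix.trace_sub]
  have hT1 : (A * A * S ^ m).trace
      = ∑ j, ((fun i => U i j) ⬝ᵥ ((A * A) *ᵥ fun i => U i j)) * lam j ^ m := by
    rw [hSm]; exact trace_helper U (A * A) _
  have hT2 : (A * (B * S ^ m)).trace
      = ∑ j, ((fun i => U i j) ⬝ᵥ (A *ᵥ fun i => U i j)) * ((δ j)⁻¹ * lam j ^ m) := by
    rw [hBSm]; exact trace_helper U A _
  have hT3 : (B * (A * S ^ m)).trace
      = ∑ j, ((fun i => U i j) ⬝ᵥ (A *ᵥ fun i => U i j)) * (lam j ^ m * (δ j)⁻¹) := by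
    rw [Matrix.trace_mul_comm, mul_assoc, show S ^ m * B = U * Matrix.diagonal (fun j => lam j ^ m * (δ j)⁻¹) * Uᵀ by
      rw [hSm, hB, key]]
    exact trace_helper U A _
  have hT4 : (B * (B * S ^ m)).trace = ∑ j, (δ j)⁻¹ * ((δ j)⁻¹ * lam j ^ m) := by
    rw [hBSm, hB, key, Matrix.trace_mul_cycle, hU, one_mul, Matrix.trace_diagonal]
  rw [hT1, hT2, hT3, hT4]
  have e2 : ∑ j, ((fun i => U i j) ⬝ᵥ (A *ᵥ fun i => U i j)) * ((δ j)⁻¹ * lam j ^ m)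
      = ∑ j, ((fun i => U i j) ⬝ᵥ (A *ᵥ fun i => U i j)) * lam j ^ m / δ j :=
    Finset.sum_congr rfl fun j _ => by rw [div_eq_mul_inv]; ring
  have e3 : ∑ j, ((fun i => U i j) ⬝ᵥ (A *ᵥ fun i => U i j)) * (lam j ^ m * (δ j)⁻¹)
      = ∑ j, ((fun i => U i j) ⬝ᵥ (A *ᵥ fun i => U i j)) * lam j ^ m / δ j :=
    Finset.sum_congr rfl fun j _ => by rw [div_eq_mul_inv]; ring
  have e4 : ∑ j, (δ j)⁻¹ * ((δ j)⁻¹ * lam j ^ m) = ∑ j, lam j ^ m / δ j ^ 2 :=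
    Finset.sum_congr rfl fun j _ => by rw [div_eq_mul_inv, sq, mul_inv]; ring
  rw [e2, e3, e4]; ring
end

section
/- Let m ≥ 0 be an integer, N ≥ 1, and let K = ⋃_{k=1}^N [a_k, b_k] with 0 < a_1 < b_1 < a_2 < … < a_N < b_N < ∞; for η > 0 write K_η = ⋃_{k=1}^N [a_k − η, b_k + η], and fix η₀ > 0 with K_{η₀} ⊂ (0, ∞). Let (μ_n) and μ be finite Borel measures on ℝ such that: (i) ∫ g dμ_n → ∫ g dμ for every bounded continuous g : ℝ → ℝ; (ii) for all sufficiently large n, μ_n(ℝ \ K_{η₀}) = 0; (iii) μ(ℝ \ K) = 0. Let δ_n, δ : ℝ → ℝ be such that δ is continuous on K_{η₀}, δ_n → δ uniformly on K_{η₀}, and there exist M > 0 and n₀ such that |δ_n(x)| ≥ M for all x ∈ K_{η₀} and all n ≥ n₀. Then ∫ x^m/δ_n(x) dμ_n(x) → ∫ x^m/δ(x) dμ(x) and ∫ x^m/δ_n(x)² dμ_n(x) → ∫ x^m/δ(x)² dμ(x) as n → ∞. -/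
open MeasureTheory Filter

/-- Lipschitz-type comparison lemma for uniform convergence. -/
lemma comp_unif {u w : ℕ → ℝ → ℝ} {v z : ℝ → ℝ} {s : Set ℝ} {C : ℝ}
    (h : TendstoUniformlyOn u v atTop s)
    (hb : ∀ᶠ n in atTop, ∀ x ∈ s, dist (w n x) (z x) ≤ C * dist (u n x) (v x)) :
    TendstoUniformlyOn w z atTop s := by
  rw [Metric.tendstoUniformlyOn_iff] at h ⊢
  intro ε hε
  set C' : ℝ := max C 0 with hC'
  have hC'0 : 0 ≤ C' := le_max_right _ _
  have hε' : 0 < ε / (C' + 1) := by positivity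
  filter_upwards [h (ε / (C' + 1)) hε', hb] with n h1 h2 x hx
  have hd : dist (u n x) (v x) < ε / (C' + 1) := by
    rw [dist_comm]; exact h1 x hx
  have hd0 : 0 ≤ dist (u n x) (v x) := dist_nonneg
  have : dist (w n x) (z x) ≤ C' * dist (u n x) (v x) := by
    refine (h2 x hx).trans ?_
    exact mul_le_mul_of_nonneg_right (le_max_left _ _) hd0
  rw [dist_comm]
  calc dist (w n x) (z x) ≤ C' * dist (u n x) (v x) := this
    _ ≤ C' * (ε / (C' + 1)) := mul_le_mul_of_nonneg_left hd.le hC'0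
    _ < (C' + 1) * (ε / (C' + 1)) := by
        apply mul_lt_mul_of_pos_right (by linarith) hε'
    _ = ε := by field_simp

/-- The main deterministic convergence helper: weak convergence plus uniform convergence
of uniformly bounded integrands supported on a compact set. -/
lemma helper_conv {Kη K : Set ℝ} (hKc : IsCompact Kη) (hKK : K ⊆ Kη)
    (μseq : ℕ → Measure ℝ) (μ : Measure ℝ)
    [∀ n, IsFiniteMeasure (μseq n)] [IsFiniteMeasure μ]
    (hweak : ∀ g : BoundedContinuousFunction ℝ ℝ,
      Tendsto (fun n => ∫ x, g x ∂(μseq n)) atTop (nhds (∫ x, g x ∂μ)))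
    (hsupp_n : ∀ᶠ n in atTop, μseq n Kηᶜ = 0)
    (hsupp : μ Kᶜ = 0)
    (fseq : ℕ → ℝ → ℝ) (f : ℝ → ℝ)
    (hfmeas : ∀ n, Measurable (fseq n))
    (hf : ContinuousOn f Kη)
    (hunif : TendstoUniformlyOn fseq f atTop Kη) :
    Tendsto (fun n => ∫ x, fseq n x ∂(μseq n)) atTop (nhds (∫ x, f x ∂μ)) := by
  -- bound for f on Kη
  obtain ⟨C0, hC0⟩ := hKc.exists_bound_of_continuousOn hf
  set C : ℝ := max C0 1 with hCdef
  have hC1 : (1 : ℝ) ≤ C := le_max_right _ _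
  have hCpos : 0 < C := lt_of_lt_of_le one_pos hC1
  have hfC : ∀ x ∈ Kη, |f x| ≤ C := fun x hx =>
    (hC0 x hx).trans (le_max_left _ _)
  -- Tietze extension, then clamp
  obtain ⟨g, hg⟩ := ContinuousMap.exists_restrict_eq (Y := ℝ) hKc.isClosed
    ⟨Kη.restrict f, hf.restrict⟩
  have hgf : ∀ x ∈ Kη, g x = f x := by
    intro x hx
    have := congrFun (congrArg ContinuousMap.toFun hg) ⟨x, hx⟩
    simp at this; exact this
  set gc : ℝ → ℝ := fun x => max (-C) (min C (g x)) with hgcdef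
  have hgc_cont : Continuous gc := by
    apply Continuous.max continuous_const
    exact Continuous.min continuous_const g.continuous
  have hgc_bd : ∀ x, ‖gc x‖ ≤ C := by
    intro x
    rw [Real.norm_eq_abs, abs_le]
    constructor
    · exact le_max_left _ _
    · exact max_le (by linarith) (min_le_left _ _)
  have hgc_eq : ∀ x ∈ Kη, gc x = f x := by
    intro x hx
    have hb := hfC x hx
    rw [abs_le] at hb
    rw [hgcdef]
    simp only
    rw [hgf x hx, min_eq_right hb.2, max_eq_right hb.1]
  set G : BoundedContinuousFunction ℝ ℝ :=
    BoundedContinuousFunction.ofNormedAddCommGroup gc hgc_cont C hgc_bd with hGdef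
  have hGx : ∀ x, G x = gc x := fun x => rfl
  -- ∫ G dμ = ∫ f dμ
  have hae : ∀ᵐ x ∂μ, x ∈ K := by
    rw [MeasureTheory.ae_iff]
    exact hsupp
  have hint_eq : ∫ x, G x ∂μ = ∫ x, f x ∂μ := by
    apply integral_congr_ae
    filter_upwards [hae] with x hx
    rw [hGx, hgc_eq x (hKK hx)]
  -- mass bound
  set B : ℝ := (μ Set.univ).toReal with hBdef
  have hBnn : 0 ≤ B := ENNReal.toReal_nonneg
  have hmass : Tendsto (fun n => ((μseq n) Set.univ).toReal) atTop (nhds B) := by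
    have h1 := hweak 1
    simpa [BoundedContinuousFunction.coe_one, integral_const, smul_eq_mul, hBdef, Measure.real] using h1
  have hmass_ev : ∀ᶠ n in atTop, ((μseq n) Set.univ).toReal ≤ B + 1 :=
    hmass.eventually (eventually_le_nhds (by linarith))
  -- difference tendsto 0
  have hdiff : Tendsto (fun n => (∫ x, fseq n x ∂(μseq n)) - ∫ x, G x ∂(μseq n))
      atTop (nhds 0) := by
    rw [NormedAddCommGroup.tendsto_nhds_zero]
    intro ε hε
    have hε' : 0 < ε / (2 * (B + 1)) := by positivity
    rw [Metric.tendstoUniformlyOn_iff] at hunif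
    filter_upwards [hunif _ hε', hsupp_n, hmass_ev] with n hn hsn hmn
    have haen : ∀ᵐ x ∂(μseq n), x ∈ Kη := by
      rw [MeasureTheory.ae_iff]; exact hsn
    -- integrability of fseq n
    have hbd_n : ∀ᵐ x ∂(μseq n), ‖fseq n x‖ ≤ C + ε / (2 * (B + 1)) := by
      filter_upwards [haen] with x hx
      have h1 : dist (f x) (fseq n x) < ε / (2 * (B + 1)) := hn x hx
      rw [Real.norm_eq_abs]
      have h2 : |fseq n x - f x| < ε / (2 * (B + 1)) := by
        rw [dist_comm, Real.dist_eq] at h1; exact h1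
      have := hfC x hx
      have habs : |fseq n x| ≤ |f x| + |fseq n x - f x| := by
        have := abs_add_le (f x) (fseq n x - f x)
        simpa using this
      linarith
    have hint_f : Integrable (fseq n) (μseq n) :=
      (integrable_const (C + ε / (2 * (B + 1)))).mono'
        (hfmeas n).aestronglyMeasurable hbd_n
    have hint_G : Integrable (fun x => G x) (μseq n) := G.integrable (μseq n)
    rw [← integral_sub hint_f hint_G]
    have hbd : ∀ᵐ x ∂(μseq n), ‖fseq n x - G x‖ ≤ ε / (2 * (B + 1)) := by
      filter_upwards [haen] with x hx
      rw [hGx, hgc_eq x hx, Real.norm_eq_abs]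
      have h1 : dist (f x) (fseq n x) < ε / (2 * (B + 1)) := hn x hx
      rw [dist_comm, Real.dist_eq] at h1
      exact le_of_lt (by simpa using h1)
    calc ‖∫ x, (fseq n x - G x) ∂(μseq n)‖
        ≤ ε / (2 * (B + 1)) * ((μseq n) Set.univ).toReal :=
          norm_integral_le_of_norm_le_const hbd
      _ ≤ ε / (2 * (B + 1)) * (B + 1) :=
          mul_le_mul_of_nonneg_left hmn hε'.le
      _ = ε / 2 := by field_simp
      _ < ε := by linarith
  have := hdiff.add (hweak G)
  rw [zero_add, hint_eq] at this
  convert this using 2 with n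
  ring


/-- Deterministic convergence lemma at the core of Theorems 5 and 8: weak convergence of
finite measures supported on (an enlargement of) a finite union of compact intervals
away from zero, together with uniform convergence and uniform non-degeneracy of the
shrinkage functions, implies convergence of the loss integrals. -/
theorem stmt_3 (m N : ℕ) (hN : 1 ≤ N) (a b : Fin N → ℝ)
    (hab : ∀ k, a k < b k) (hord : ∀ k l : Fin N, k < l → b k < a l)
    (ha0 : 0 < a ⟨0, hN⟩)
    (η₀ : ℝ) (hη₀ : 0 < η₀)
    (hKη₀ : (⋃ k, Set.Icc (a k - η₀) (b k + η₀)) ⊆ Set.Ioi (0 : ℝ))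
    (μseq : ℕ → Measure ℝ) (μ : Measure ℝ)
    [∀ n, IsFiniteMeasure (μseq n)] [IsFiniteMeasure μ]
    (hweak : ∀ g : BoundedContinuousFunction ℝ ℝ,
      Tendsto (fun n => ∫ x, g x ∂(μseq n)) atTop (nhds (∫ x, g x ∂μ)))
    (hsupp_n : ∀ᶠ n in atTop, μseq n (⋃ k, Set.Icc (a k - η₀) (b k + η₀))ᶜ = 0)
    (hsupp : μ (⋃ k, Set.Icc (a k) (b k))ᶜ = 0)
    (δseq : ℕ → ℝ → ℝ) (δ : ℝ → ℝ)
    (hδmeas : ∀ n, Measurable (δseq n))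
    (hδcont : ContinuousOn δ (⋃ k, Set.Icc (a k - η₀) (b k + η₀)))
    (hδunif : TendstoUniformlyOn δseq δ atTop (⋃ k, Set.Icc (a k - η₀) (b k + η₀)))
    (M : ℝ) (hM : 0 < M) (n₀ : ℕ)
    (hlb : ∀ n ≥ n₀, ∀ x ∈ ⋃ k, Set.Icc (a k - η₀) (b k + η₀), M ≤ |δseq n x|) :
    Tendsto (fun n => ∫ x, x ^ m / δseq n x ∂(μseq n)) atTop
        (nhds (∫ x, x ^ m / δ x ∂μ)) ∧
      Tendsto (fun n => ∫ x, x ^ m / (δseq n x) ^ 2 ∂(μseq n)) atTop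
        (nhds (∫ x, x ^ m / (δ x) ^ 2 ∂μ)) := by
  set Kη : Set ℝ := ⋃ k, Set.Icc (a k - η₀) (b k + η₀) with hKηdef
  set K : Set ℝ := ⋃ k, Set.Icc (a k) (b k) with hKdef
  have hKc : IsCompact Kη := isCompact_iUnion fun k => isCompact_Icc
  have hKK : K ⊆ Kη :=
    Set.iUnion_mono fun k => Set.Icc_subset_Icc (by linarith) (by linarith)
  -- lower bound for δ on Kη
  have hδlb : ∀ x ∈ Kη, M ≤ |δ x| := by
    intro x hx
    have hpt : Tendsto (fun n => δseq n x) atTop (nhds (δ x)) :=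
      hδunif.tendsto_at hx
    have habs : Tendsto (fun n => |δseq n x|) atTop (nhds |δ x|) := hpt.abs
    refine ge_of_tendsto habs ?_
    filter_upwards [eventually_ge_atTop n₀] with n hn
    exact hlb n hn x hx
  have hδne : ∀ x ∈ Kη, δ x ≠ 0 := fun x hx => by
    have := hδlb x hx
    intro h; rw [h] at this; simp at this; linarith
  -- bound for x^m on Kη
  obtain ⟨C₁, hC₁⟩ := hKc.exists_bound_of_continuousOn (continuous_pow m).continuousOn
  have hC₁' : ∀ x ∈ Kη, |x ^ m| ≤ C₁ := fun x hx => by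
    have := hC₁ x hx; rwa [Real.norm_eq_abs] at this
  -- bound for δ on Kη
  obtain ⟨C₂, hC₂⟩ := hKc.exists_bound_of_continuousOn hδcont
  have hC₂' : ∀ x ∈ Kη, |δ x| ≤ C₂ := fun x hx => by
    have := hC₂ x hx; rwa [Real.norm_eq_abs] at this
  -- uniform convergence of x^m / δ_n
  have hu1 : TendstoUniformlyOn (fun n x => x ^ m / δseq n x)
      (fun x => x ^ m / δ x) atTop Kη := by
    apply comp_unif (C := C₁ / M ^ 2) hδunif
    filter_upwards [eventually_ge_atTop n₀] with n hn x hx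
    have hp : M ≤ |δseq n x| := hlb n hn x hx
    have hq : M ≤ |δ x| := hδlb x hx
    have hpne : δseq n x ≠ 0 := fun h => by rw [h] at hp; simp at hp; linarith
    have hqne : δ x ≠ 0 := hδne x hx
    have heq : x ^ m / δseq n x - x ^ m / δ x
        = x ^ m * (δ x - δseq n x) / (δseq n x * δ x) := by
      field_simp
    rw [Real.dist_eq, Real.dist_eq, heq, abs_div, abs_mul, abs_mul]
    have hA : |x ^ m| ≤ C₁ := hC₁' x hx
    have hd0 : (0:ℝ) ≤ |δ x - δseq n x| := abs_nonneg _
    have hA0 : (0:ℝ) ≤ |x ^ m| := abs_nonneg _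
    have hnum : |x ^ m| * |δ x - δseq n x| ≤ C₁ * |δ x - δseq n x| :=
      mul_le_mul_of_nonneg_right hA hd0
    have hden : M ^ 2 ≤ |δseq n x| * |δ x| := by nlinarith
    have habs' : |δseq n x - δ x| = |δ x - δseq n x| := abs_sub_comm _ _
    rw [habs']
    have hC₁0 : (0:ℝ) ≤ C₁ := le_trans hA0 hA
    calc |x ^ m| * |δ x - δseq n x| / (|δseq n x| * |δ x|)
        ≤ C₁ * |δ x - δseq n x| / M ^ 2 := by
          apply div_le_div₀ (mul_nonneg hC₁0 hd0) hnum (by positivity) hden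
      _ = C₁ / M ^ 2 * |δ x - δseq n x| := by ring
  -- uniform convergence of x^m / δ_n^2
  have hu2 : TendstoUniformlyOn (fun n x => x ^ m / (δseq n x) ^ 2)
      (fun x => x ^ m / (δ x) ^ 2) atTop Kη := by
    apply comp_unif (C := C₁ * (2 * C₂ + 1) / M ^ 4) hδunif
    rw [Metric.tendstoUniformlyOn_iff] at hδunif
    filter_upwards [eventually_ge_atTop n₀, hδunif 1 one_pos] with n hn h1 x hx
    have hp : M ≤ |δseq n x| := hlb n hn x hx
    have hq : M ≤ |δ x| := hδlb x hx
    have hqC : |δ x| ≤ C₂ := hC₂' x hx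
    have hpC : |δseq n x| ≤ C₂ + 1 := by
      have := h1 x hx
      rw [dist_comm, Real.dist_eq] at this
      have h2 : |δseq n x| ≤ |δ x| + |δseq n x - δ x| := by
        have := abs_add_le (δ x) (δseq n x - δ x); simpa using this
      linarith
    have hpne : δseq n x ≠ 0 := fun h => by rw [h] at hp; simp at hp; linarith
    have hqne : δ x ≠ 0 := hδne x hx
    have heq : x ^ m / (δseq n x) ^ 2 - x ^ m / (δ x) ^ 2
        = x ^ m * ((δ x - δseq n x) * (δ x + δseq n x))
            / ((δseq n x) ^ 2 * (δ x) ^ 2) := by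
      field_simp; ring
    rw [Real.dist_eq, Real.dist_eq, heq, abs_div, abs_mul, abs_mul]
    have hA : |x ^ m| ≤ C₁ := hC₁' x hx
    have hA0 : (0:ℝ) ≤ |x ^ m| := abs_nonneg _
    have hd0 : (0:ℝ) ≤ |δ x - δseq n x| := abs_nonneg _
    have hsum : |δ x + δseq n x| ≤ 2 * C₂ + 1 := by
      calc |δ x + δseq n x| ≤ |δ x| + |δseq n x| := abs_add_le _ _
        _ ≤ 2 * C₂ + 1 := by linarith
    have h0 : (0:ℝ) ≤ |δ x + δseq n x| := abs_nonneg _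
    have hC₁0 : (0:ℝ) ≤ C₁ := le_trans hA0 hA
    have hC₂0 : (0:ℝ) ≤ 2 * C₂ + 1 := le_trans h0 hsum
    have hnum : |x ^ m| * (|δ x - δseq n x| * |δ x + δseq n x|)
        ≤ C₁ * (2 * C₂ + 1) * |δ x - δseq n x| := by
      have h2 := mul_le_mul hA (mul_le_mul_of_nonneg_left hsum hd0)
        (mul_nonneg hd0 h0) hC₁0
      calc |x ^ m| * (|δ x - δseq n x| * |δ x + δseq n x|)
          ≤ C₁ * (|δ x - δseq n x| * (2 * C₂ + 1)) := h2
        _ = C₁ * (2 * C₂ + 1) * |δ x - δseq n x| := by ring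
    have hden : M ^ 4 ≤ |δseq n x ^ 2 * δ x ^ 2| := by
      rw [abs_mul, abs_pow, abs_pow]
      have h2 : M ^ 2 ≤ |δseq n x| * |δ x| := by nlinarith
      have h3 := mul_self_le_mul_self (by positivity : (0:ℝ) ≤ M ^ 2) h2
      nlinarith [abs_nonneg (δseq n x), abs_nonneg (δ x)]
    have habs' : |δseq n x - δ x| = |δ x - δseq n x| := abs_sub_comm _ _
    rw [habs']
    calc |x ^ m| * (|δ x - δseq n x| * |δ x + δseq n x|) / |δseq n x ^ 2 * δ x ^ 2|
        ≤ C₁ * (2 * C₂ + 1) * |δ x - δseq n x| / M ^ 4 := by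
          apply div_le_div₀ (mul_nonneg (mul_nonneg hC₁0 hC₂0) hd0) hnum
            (by positivity) hden
      _ = C₁ * (2 * C₂ + 1) / M ^ 4 * |δ x - δseq n x| := by ring
  constructor
  · exact helper_conv hKc hKK μseq μ hweak hsupp_n hsupp _ _
      (fun n => ((continuous_pow m).measurable).div (hδmeas n))
      (((continuous_pow m).continuousOn).div hδcont hδne) hu1
  · exact helper_conv hKc hKK μseq μ hweak hsupp_n hsupp _ _
      (fun n => ((continuous_pow m).measurable).div ((hδmeas n).pow_const 2))
      (((continuous_pow m).continuousOn).div (hδcont.pow 2)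
        (fun x hx => pow_ne_zero 2 (hδne x hx))) hu2
end

section
/- Let d ≥ 1, K ≥ 1, let π_1, …, π_K > 0 with Σ_{k=1}^K π_k = 1, and let m_1, …, m_K : ℝ^d → ℝ be positive functions that are twice differentiable at a point x ∈ ℝ^d. Set m_*(y) = Σ_{k} π_k m_k(y), and for a positive twice-differentiable function f define t_f(x) = x + ∇ log f(x) and D_f(x) = ‖∇ log f(x)‖² − 2·Δf(x)/f(x), where Δ is the Laplacian; set π_k*(x) = π_k m_k(x)/m_*(x). Then: (a) t_{m_*}(x) = Σ_{k=1}^K π_k*(x)·t_{m_k}(x); and (b) D_{m_*}(x) = Σ_{k=1}^K π_k*(x)·[ D_{m_k}(x) − (1/2)·Σ_{l=1}^K π_l*(x)·‖t_{m_k}(x) − t_{m_l}(x)‖² ]. -/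
open MeasureTheory

section AuxLemmas

open Finset
open scoped RealInnerProductSpace

variable {E : Type*} [NormedAddCommGroup E] [InnerProductSpace ℝ E] [CompleteSpace E]

private lemma grad_log_aux (f : E → ℝ) (x : E) (hf : DifferentiableAt ℝ f x)
    (hne : f x ≠ 0) :
    gradient (fun y => Real.log (f y)) x = (f x)⁻¹ • gradient f x := by
  have h1 : HasFDerivAt (fun y => Real.log (f y)) ((f x)⁻¹ • fderiv ℝ f x) x :=
    (Real.hasDerivAt_log hne).comp_hasFDerivAt x hf.hasFDerivAt
  simp only [gradient, h1.fderiv, _root_.map_smul]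

private lemma grad_sum_aux {K : ℕ} (w : Fin K → ℝ) (m : Fin K → E → ℝ) (x : E)
    (hm : ∀ k, DifferentiableAt ℝ (m k) x) :
    gradient (fun y => ∑ k, w k * m k y) x = ∑ k, w k • gradient (m k) x := by
  have hF : HasFDerivAt (fun y => ∑ k, w k * m k y) (∑ k, w k • fderiv ℝ (m k) x) x :=
    HasFDerivAt.fun_sum fun k _ => (hm k).hasFDerivAt.const_mul (w k)
  simp only [gradient, hF.fderiv, map_sum, _root_.map_smul]

omit [CompleteSpace E] in
private lemma key_id {K : ℕ} (a : Fin K → ℝ) (G : Fin K → E) (ha : ∑ k, a k = 1) :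
    ∑ k, a k * ‖G k‖ ^ 2 - (1/2) * ∑ k, a k * ∑ l, a l * ‖G k - G l‖ ^ 2
      = ‖∑ k, a k • G k‖ ^ 2 := by
  have hin : ‖∑ k, a k • G k‖ ^ 2 = ∑ k, a k * ∑ l, a l * ⟪G k, G l⟫ := by
    rw [← real_inner_self_eq_norm_sq, sum_inner]
    refine Finset.sum_congr rfl fun k _ => ?_
    rw [real_inner_smul_left, inner_sum]
    congr 1
    exact Finset.sum_congr rfl fun l _ => by rw [real_inner_smul_right]
  have hrow : ∀ k, ∑ l, a l * ‖G k - G l‖ ^ 2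
      = ‖G k‖ ^ 2 + (∑ l, a l * ‖G l‖ ^ 2) - 2 * ∑ l, a l * ⟪G k, G l⟫ := by
    intro k
    calc ∑ l, a l * ‖G k - G l‖ ^ 2
        = ∑ l, (a l * ‖G k‖ ^ 2 + a l * ‖G l‖ ^ 2 - 2 * (a l * ⟪G k, G l⟫)) :=
          Finset.sum_congr rfl fun l _ => by rw [norm_sub_sq_real]; ring
      _ = _ := by
          rw [Finset.sum_sub_distrib, Finset.sum_add_distrib, ← Finset.sum_mul,
            ← Finset.mul_sum, ha]; ring
  have h2 : ∑ k, a k * ∑ l, a l * ‖G k - G l‖ ^ 2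
      = (∑ k, a k * ‖G k‖ ^ 2) + (∑ l, a l * ‖G l‖ ^ 2)
        - 2 * ∑ k, a k * ∑ l, a l * ⟪G k, G l⟫ := by
    calc ∑ k, a k * ∑ l, a l * ‖G k - G l‖ ^ 2
        = ∑ k, (a k * ‖G k‖ ^ 2 + a k * (∑ l, a l * ‖G l‖ ^ 2)
            - 2 * (a k * ∑ l, a l * ⟪G k, G l⟫)) :=
          Finset.sum_congr rfl fun k _ => by rw [hrow k]; ring
      _ = _ := by
          rw [Finset.sum_sub_distrib, Finset.sum_add_distrib, ← Finset.sum_mul,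
            ← Finset.mul_sum, ha]; ring
  rw [hin, h2]; ring

omit [InnerProductSpace ℝ E] [CompleteSpace E] in
private lemma aff_combo [Module ℝ E] {K : ℕ} (a : Fin K → ℝ) (ha : ∑ k, a k = 1)
    (x : E) (G : Fin K → E) :
    x + ∑ k, a k • G k = ∑ k, a k • (x + G k) := by
  simp only [smul_add, Finset.sum_add_distrib, ← Finset.sum_smul, ha, one_smul]

end AuxLemmas

/-- Coordinate Laplacian `Δf(x) = Σ_i ∂²f/∂x_i²(x)` on Euclidean space. -/
noncomputable def lapl {d : ℕ} (f : EuclideanSpace ℝ (Fin d) → ℝ)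
    (x : EuclideanSpace ℝ (Fin d)) : ℝ :=
  ∑ i, fderiv ℝ (fun y => fderiv ℝ f y (EuclideanSpace.single i 1)) x
      (EuclideanSpace.single i 1)

private lemma lapl_sum {d K : ℕ} (w : Fin K → ℝ) (m : Fin K → EuclideanSpace ℝ (Fin d) → ℝ)
    (x : EuclideanSpace ℝ (Fin d)) (hm : ∀ k, ContDiffAt ℝ 2 (m k) x) :
    lapl (fun y => ∑ k, w k * m k y) x = ∑ k, w k * lapl (m k) x := by
  have hev : ∀ᶠ y in nhds x, ∀ k, DifferentiableAt ℝ (m k) y := by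
    rw [Filter.eventually_all]
    intro k
    exact ((hm k).eventually (by norm_num)).mono fun y hy =>
      hy.differentiableAt two_ne_zero
  have hd2 : ∀ k v, DifferentiableAt ℝ (fun y => fderiv ℝ (m k) y v) x := by
    intro k v
    exact (((hm k).fderiv_right (m := 1) (by norm_num)).differentiableAt one_ne_zero).clm_apply
      (differentiableAt_const v)
  have hfe : ∀ v : EuclideanSpace ℝ (Fin d),
      (fun y => fderiv ℝ (fun z => ∑ k, w k * m k z) y v)
        =ᶠ[nhds x] (fun y => ∑ k, w k * fderiv ℝ (m k) y v) := by
    intro v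
    refine hev.mono fun y hy => ?_
    show fderiv ℝ (fun z => ∑ k, w k * m k z) y v = ∑ k, w k * fderiv ℝ (m k) y v
    rw [(HasFDerivAt.fun_sum fun k (_ : k ∈ Finset.univ) =>
      ((hy k).hasFDerivAt.const_mul (w k))).fderiv]
    simp
  have hstep : ∀ v : EuclideanSpace ℝ (Fin d),
      fderiv ℝ (fun y => fderiv ℝ (fun z => ∑ k, w k * m k z) y v) x v
        = ∑ k, w k * fderiv ℝ (fun y => fderiv ℝ (m k) y v) x v := by
    intro v
    rw [(hfe v).fderiv_eq]
    rw [fderiv_fun_sum fun k _ => ((hd2 k v).const_mul (w k))]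
    simp only [ContinuousLinearMap.sum_apply]
    refine Finset.sum_congr rfl fun k _ => ?_
    rw [fderiv_const_mul (hd2 k v) (w k)]
    simp
  unfold lapl
  rw [Finset.sum_congr rfl fun i (_ : i ∈ Finset.univ) =>
      hstep (EuclideanSpace.single i 1),
    Finset.sum_comm]
  exact Finset.sum_congr rfl fun k _ => (Finset.mul_sum _ _ _).symm

/-- The Tweedie-type shrinkage rule `t_f(x) = x + ∇ log f(x)`. -/
noncomputable def tweedieRule {d : ℕ} (f : EuclideanSpace ℝ (Fin d) → ℝ)
    (x : EuclideanSpace ℝ (Fin d)) : EuclideanSpace ℝ (Fin d) :=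
  x + gradient (fun y => Real.log (f y)) x

/-- The risk-gain functional `D_f(x) = ‖∇ log f(x)‖² − 2·Δf(x)/f(x)`. -/
noncomputable def gainD {d : ℕ} (f : EuclideanSpace ℝ (Fin d) → ℝ)
    (x : EuclideanSpace ℝ (Fin d)) : ℝ :=
  ‖gradient (fun y => Real.log (f y)) x‖ ^ 2 - 2 * lapl f x / f x

/-- Mixture decomposition of Section S.2 (following George 1986): for the mixture
marginal `m_* = Σ_k π_k m_k`, the shrinkage rule `t_{m_*}` is the posterior-weighted
combination of the component rules, and `D_{m_*}` is a posterior-weighted combination of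
the component gains minus the pairwise shrinkage-conflict term. -/
theorem stmt_13 (d K : ℕ) (hd : 1 ≤ d) (hK : 1 ≤ K)
    (w : Fin K → ℝ) (hw : ∀ k, 0 < w k) (hw1 : ∑ k, w k = 1)
    (m : Fin K → EuclideanSpace ℝ (Fin d) → ℝ)
    (x : EuclideanSpace ℝ (Fin d))
    (hmpos : ∀ k y, 0 < m k y)
    (hmdiff : ∀ k, ContDiffAt ℝ 2 (m k) x)
    (mstar : EuclideanSpace ℝ (Fin d) → ℝ)
    (hmstar : ∀ y, mstar y = ∑ k, w k * m k y)
    (wstar : Fin K → ℝ)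
    (hwstar : ∀ k, wstar k = w k * m k x / mstar x) :
    tweedieRule mstar x = ∑ k, wstar k • tweedieRule (m k) x ∧
    gainD mstar x = ∑ k, wstar k *
      (gainD (m k) x -
        (1 / 2) * ∑ l, wstar l * ‖tweedieRule (m k) x - tweedieRule (m l) x‖ ^ 2) := by
  haveI : Nonempty (Fin K) := ⟨⟨0, hK⟩⟩
  set c : ℝ := ∑ k, w k * m k x with hcdef
  have hc : 0 < c :=
    Finset.sum_pos (fun k _ => mul_pos (hw k) (hmpos k x)) Finset.univ_nonempty
  have hms : mstar = fun y => ∑ k, w k * m k y := funext hmstar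
  have hmsx : mstar x = c := hmstar x
  have hdiff : ∀ k, DifferentiableAt ℝ (m k) x := fun k =>
    (hmdiff k).differentiableAt two_ne_zero
  have hdms : DifferentiableAt ℝ mstar x := by
    rw [hms]; exact DifferentiableAt.fun_sum fun k _ => (hdiff k).const_mul (w k)
  have hmsne : mstar x ≠ 0 := by rw [hmsx]; exact hc.ne'
  have hgradms : gradient mstar x = ∑ k, w k • gradient (m k) x := by
    rw [hms]; exact grad_sum_aux w m x hdiff
  have hlaplms : lapl mstar x = ∑ k, w k * lapl (m k) x := by
    rw [hms]; exact lapl_sum w m x hmdiff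
  have hwstar' : ∀ k, wstar k = w k * m k x / c := fun k => by rw [hwstar k, hmsx]
  have hws1 : ∑ k, wstar k = 1 := by
    simp only [hwstar']
    rw [← Finset.sum_div]
    exact div_self hc.ne'
  have hG : ∀ k, gradient (fun y => Real.log (m k y)) x
      = (m k x)⁻¹ • gradient (m k) x := fun k =>
    grad_log_aux (m k) x (hdiff k) (hmpos k x).ne'
  have hstarG : gradient (fun y => Real.log (mstar y)) x
      = ∑ k, wstar k • gradient (fun y => Real.log (m k y)) x := by
    rw [grad_log_aux mstar x hdms hmsne, hmsx, hgradms, Finset.smul_sum]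
    refine Finset.sum_congr rfl fun k _ => ?_
    rw [hG k, hwstar' k, smul_smul, smul_smul]
    congr 1
    have h1 : m k x ≠ 0 := (hmpos k x).ne'
    field_simp
  constructor
  · simp only [tweedieRule]
    rw [hstarG]
    have := aff_combo wstar hws1 x
      (fun k => gradient (fun y => Real.log (m k y)) x)
    simpa using this
  · simp only [gainD, tweedieRule, add_sub_add_left_eq_sub]
    rw [hstarG, hlaplms, hmsx]
    have hkey := key_id wstar (fun k => gradient (fun y => Real.log (m k y)) x) hws1
    beta_reduce at hkey
    rw [← hkey]
    have hterm : ∀ k, wstar k * ((‖gradient (fun y => Real.log (m k y)) x‖ ^ 2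
          - 2 * lapl (m k) x / m k x)
        - 1 / 2 * ∑ l, wstar l * ‖gradient (fun y => Real.log (m k y)) x
            - gradient (fun y => Real.log (m l y)) x‖ ^ 2)
        = wstar k * ‖gradient (fun y => Real.log (m k y)) x‖ ^ 2
          - 2 * (w k * lapl (m k) x) / c
          - 1 / 2 * (wstar k * ∑ l, wstar l * ‖gradient (fun y => Real.log (m k y)) x
              - gradient (fun y => Real.log (m l y)) x‖ ^ 2) := by
      intro k
      rw [hwstar' k]
      have h1 : m k x ≠ 0 := (hmpos k x).ne'
      field_simp
    rw [Finset.sum_congr rfl fun k _ => hterm k, Finset.sum_sub_distrib,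
      Finset.sum_sub_distrib, ← Finset.sum_div, ← Finset.mul_sum, ← Finset.mul_sum]
    ring
end
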